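/- Let n ≥ 2 and 1 ≤ p ≤ n. For every λ ∈ 𝒫_p and all indices i, j with λ_i ≤ λ_j, one has F_i(λ) ≥ F_j(λ). Consequently, if λ_j = min_{1 ≤ i ≤ n} λ_i, then F_j(λ) ≥ (1/n) ∑_{i=1}^n F_i(λ). -/

import Mathlib

open Finset

/-- The cone `𝒫_p ⊆ ℝ^n`: every sum of `p` pairwise distinct components is positive. -/
def Pcone (n p : ℕ) : Set (Fin n → ℝ) :=
  {lam | ∀ S : Finset (Fin n), S.card = p → 0 < ∑ i ∈ S, lam i}

/-- `M_p^n(λ) = ∏_{|S| = p} ∑_{i ∈ S} λ_i`. -/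
def Mpn (n p : ℕ) (lam : Fin n → ℝ) : ℝ :=
  ∏ S ∈ Finset.univ.powersetCard p, ∑ i ∈ S, lam i

/-- `F(λ) = (M_p^n(λ))^{1/C(n,p)}`. -/
noncomputable def Fpn (n p : ℕ) (lam : Fin n → ℝ) : ℝ :=
  Mpn n p lam ^ ((n.choose p : ℝ)⁻¹)

/-- `F_i(λ) = ∂F/∂λ_i (λ)`. -/
noncomputable def Fi (n p : ℕ) (lam : Fin n → ℝ) (i : Fin n) : ℝ :=
  fderiv ℝ (Fpn n p) lam (Pi.single i 1)

lemma mpn_pos {n p : ℕ} {lam : Fin n → ℝ} (h : lam ∈ Pcone n p) : 0 < Mpn n p lam := by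
  apply Finset.prod_pos
  intro S hS
  exact h S (Finset.mem_powersetCard_univ.mp hS)

noncomputable def ellS {n : ℕ} (S : Finset (Fin n)) : (Fin n → ℝ) →L[ℝ] ℝ :=
  ∑ k ∈ S, ContinuousLinearMap.proj k

lemma ellS_apply {n : ℕ} (S : Finset (Fin n)) (v : Fin n → ℝ) :
    ellS S v = ∑ k ∈ S, v k := by
  simp [ellS]

lemma hasFDerivAt_Mpn (n p : ℕ) (lam : Fin n → ℝ) :
    HasFDerivAt (Mpn n p)
      (∑ S ∈ Finset.univ.powersetCard p,
        (∏ T ∈ (Finset.univ.powersetCard p).erase S, ∑ k ∈ T, lam k) • ellS S) lam := by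
  have h : ∀ S ∈ Finset.univ.powersetCard p,
      HasFDerivAt (fun x : Fin n → ℝ => ∑ k ∈ S, x k) (ellS S) lam := by
    intro S _
    have := (ellS S).hasFDerivAt (x := lam)
    apply this.congr_of_eventuallyEq
    filter_upwards with x
    rw [ellS_apply]
  exact HasFDerivAt.finset_prod h

lemma hasFDerivAt_Fpn {n p : ℕ} {lam : Fin n → ℝ} (h : lam ∈ Pcone n p) :
    HasFDerivAt (Fpn n p)
      (((n.choose p : ℝ)⁻¹ * Mpn n p lam ^ ((n.choose p : ℝ)⁻¹ - 1)) •
        ∑ S ∈ Finset.univ.powersetCard p,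
          (∏ T ∈ (Finset.univ.powersetCard p).erase S, ∑ k ∈ T, lam k) • ellS S) lam :=
  (hasFDerivAt_Mpn n p lam).rpow_const (Or.inl (mpn_pos h).ne')

lemma Fi_eq {n p : ℕ} {lam : Fin n → ℝ} (h : lam ∈ Pcone n p) (i : Fin n) :
    Fi n p lam i = ((n.choose p : ℝ)⁻¹ * Mpn n p lam ^ ((n.choose p : ℝ)⁻¹ - 1)) *
      ∑ S ∈ (Finset.univ.powersetCard p).filter (fun S => i ∈ S),
        ∏ T ∈ (Finset.univ.powersetCard p).erase S, ∑ k ∈ T, lam k := by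
  rw [Fi, (hasFDerivAt_Fpn h).fderiv]
  simp only [ContinuousLinearMap.smul_apply, ContinuousLinearMap.coe_sum',
    Finset.sum_apply, ContinuousLinearMap.coe_smul', Pi.smul_apply, ellS_apply,
    Finset.sum_pi_single', smul_eq_mul]
  rw [Finset.sum_filter]
  congr 1
  apply Finset.sum_congr rfl
  intro S _
  by_cases hi : i ∈ S <;> simp [hi]

lemma prod_erase_eq {n p : ℕ} {lam : Fin n → ℝ} (h : lam ∈ Pcone n p) {S : Finset (Fin n)}
    (hS : S ∈ Finset.univ.powersetCard p) :
    ∏ T ∈ (Finset.univ.powersetCard p).erase S, ∑ k ∈ T, lam k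
      = Mpn n p lam / ∑ k ∈ S, lam k := by
  have hpos := h S (Finset.mem_powersetCard_univ.mp hS)
  rw [eq_div_iff hpos.ne', Mpn]
  exact Finset.prod_erase_mul _ _ hS

lemma sum_key {n p : ℕ} {lam : Fin n → ℝ} (h : lam ∈ Pcone n p) {i j : Fin n}
    (hij : lam i ≤ lam j) :
    ∑ S ∈ (Finset.univ.powersetCard p).filter (fun S => j ∈ S),
        Mpn n p lam / ∑ k ∈ S, lam k
      ≤ ∑ S ∈ (Finset.univ.powersetCard p).filter (fun S => i ∈ S),
        Mpn n p lam / ∑ k ∈ S, lam k := by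
  rcases eq_or_ne i j with rfl | hne
  · exact le_rfl
  set A := (Finset.univ : Finset (Fin n)).powersetCard p with hA
  set f : Finset (Fin n) → ℝ := fun S => Mpn n p lam / ∑ k ∈ S, lam k with hf
  rw [← Finset.sum_filter_add_sum_filter_not (A.filter (fun S => j ∈ S)) (fun S => i ∈ S) f,
      ← Finset.sum_filter_add_sum_filter_not (A.filter (fun S => i ∈ S)) (fun S => j ∈ S) f]
  rw [Finset.filter_comm]
  apply add_le_add le_rfl
  -- bijection between sets containing j not i and sets containing i not j
  have hcard : ∀ S ∈ (A.filter (fun S => j ∈ S)).filter (fun S => ¬ i ∈ S),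
      (insert i (S.erase j)).card = p ∧ i ∈ insert i (S.erase j) ∧ j ∉ insert i (S.erase j) := by
    intro S hS
    simp only [Finset.mem_filter, hA, Finset.mem_powersetCard_univ] at hS
    obtain ⟨⟨hSp, hjS⟩, hiS⟩ := hS
    refine ⟨?_, Finset.mem_insert_self _ _, ?_⟩
    · have hp : 0 < p := hSp ▸ Finset.card_pos.mpr ⟨j, hjS⟩
      rw [Finset.card_insert_of_notMem (fun hmem => hiS (Finset.mem_of_mem_erase hmem)),
        Finset.card_erase_of_mem hjS, hSp]
      omega
    · simp only [Finset.mem_insert, Finset.mem_erase]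
      push_neg
      exact ⟨hne.symm, fun h' _ => absurd rfl h'⟩
  set Bj := (A.filter (fun S => j ∈ S)).filter (fun S => ¬ i ∈ S) with hBj
  set Bi := (A.filter (fun S => i ∈ S)).filter (fun S => ¬ j ∈ S) with hBi
  have hmem : ∀ S ∈ Bj, insert i (S.erase j) ∈ Bi := by
    intro S hS
    obtain ⟨hc, hi', hj'⟩ := hcard S hS
    simp only [hBi, Finset.mem_filter, hA, Finset.mem_powersetCard_univ]
    exact ⟨⟨hc, hi'⟩, hj'⟩
  have hmem' : ∀ S ∈ Bi, insert j (S.erase i) ∈ Bj := by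
    intro S hS
    simp only [hBi, Finset.mem_filter, hA, Finset.mem_powersetCard_univ] at hS
    obtain ⟨⟨hSp, hiS⟩, hjS⟩ := hS
    simp only [hBj, Finset.mem_filter, hA, Finset.mem_powersetCard_univ]
    refine ⟨⟨?_, Finset.mem_insert_self _ _⟩, ?_⟩
    · have hp : 0 < p := hSp ▸ Finset.card_pos.mpr ⟨i, hiS⟩
      rw [Finset.card_insert_of_notMem (fun hmem => hjS (Finset.mem_of_mem_erase hmem)),
        Finset.card_erase_of_mem hiS, hSp]
      omega
    · simp only [Finset.mem_insert, Finset.mem_erase]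
      push_neg
      exact ⟨hne, fun h' _ => absurd rfl h'⟩
  have hsum : ∑ S ∈ Bi, f S = ∑ S ∈ Bj, f (insert i (S.erase j)) := by
    refine Finset.sum_nbij' (fun S => insert j (S.erase i)) (fun S => insert i (S.erase j))
      hmem' hmem ?_ ?_ ?_
    · intro S hS
      simp only [hBi, Finset.mem_filter] at hS
      have hj' : j ∉ S.erase i := fun hm => hS.2 (Finset.mem_of_mem_erase hm)
      simp only [Finset.erase_insert hj', Finset.insert_erase hS.1.2]
    · intro S hS
      simp only [hBj, Finset.mem_filter] at hS
      have hi' : i ∉ S.erase j := fun hm => hS.2 (Finset.mem_of_mem_erase hm)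
      simp only [Finset.erase_insert hi', Finset.insert_erase hS.1.2]
    · intro S hS
      simp only [hBi, Finset.mem_filter] at hS
      have hj' : j ∉ S.erase i := fun hm => hS.2 (Finset.mem_of_mem_erase hm)
      simp only [Finset.erase_insert hj', Finset.insert_erase hS.1.2]
  rw [hsum]
  apply Finset.sum_le_sum
  intro S hS
  simp only [hBj, Finset.mem_filter, hA, Finset.mem_powersetCard_univ] at hS
  obtain ⟨⟨hSp, hjS⟩, hiS⟩ := hS
  have hiE : i ∉ S.erase j := fun hmem => hiS (Finset.mem_of_mem_erase hmem)
  have hsum1 : ∑ k ∈ insert i (S.erase j), lam k = lam i + (∑ k ∈ S, lam k - lam j) := by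
    rw [Finset.sum_insert hiE, Finset.sum_erase_eq_sub hjS]
  have hc : (insert i (S.erase j)).card = p := (hcard S (by
    simp only [hBj, Finset.mem_filter, hA, Finset.mem_powersetCard_univ]
    exact ⟨⟨hSp, hjS⟩, hiS⟩)).1
  have hpos' : 0 < ∑ k ∈ insert i (S.erase j), lam k := h _ hc
  have hle : ∑ k ∈ insert i (S.erase j), lam k ≤ ∑ k ∈ S, lam k := by
    rw [hsum1]; linarith
  simp only [hf]
  gcongr
  exact (mpn_pos h).le


/-- On `𝒫_p`, if `λ_i ≤ λ_j` then `F_i(λ) ≥ F_j(λ)`; consequently, if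
`λ_j` is the minimal component then `F_j(λ) ≥ (1/n) ∑_i F_i(λ)`. -/
theorem Fi_antitone_and_min_index_bound (n p : ℕ) (hn : 2 ≤ n) (hp1 : 1 ≤ p)
    (hpn : p ≤ n) :
    ∀ lam ∈ Pcone n p,
      (∀ i j : Fin n, lam i ≤ lam j → Fi n p lam j ≤ Fi n p lam i) ∧
      (∀ j : Fin n, (∀ i : Fin n, lam j ≤ lam i) →
        (1 / n : ℝ) * ∑ i, Fi n p lam i ≤ Fi n p lam j) := by
  intro lam hlam
  have hmono : ∀ i j : Fin n, lam i ≤ lam j → Fi n p lam j ≤ Fi n p lam i := by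
    intro i j hij
    rw [Fi_eq hlam, Fi_eq hlam]
    have hκ : 0 ≤ (n.choose p : ℝ)⁻¹ * Mpn n p lam ^ ((n.choose p : ℝ)⁻¹ - 1) := by
      have h1 : (0:ℝ) < n.choose p := by exact_mod_cast Nat.choose_pos hpn
      exact (mul_pos (inv_pos.mpr h1) (Real.rpow_pos_of_pos (mpn_pos hlam) _)).le
    apply mul_le_mul_of_nonneg_left _ hκ
    have e1 : ∀ k : Fin n, ∑ S ∈ (Finset.univ.powersetCard p).filter (fun S => k ∈ S),
          ∏ T ∈ (Finset.univ.powersetCard p).erase S, ∑ m ∈ T, lam m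
        = ∑ S ∈ (Finset.univ.powersetCard p).filter (fun S => k ∈ S),
          Mpn n p lam / ∑ m ∈ S, lam m := by
      intro k
      apply Finset.sum_congr rfl
      intro S hS
      exact prod_erase_eq hlam (Finset.mem_filter.mp hS).1
    rw [e1, e1]
    exact sum_key hlam hij
  refine ⟨hmono, fun j hj => ?_⟩
  have hsum : ∑ i, Fi n p lam i ≤ (n : ℝ) * Fi n p lam j := by
    calc ∑ i, Fi n p lam i ≤ ∑ _i : Fin n, Fi n p lam j :=
          Finset.sum_le_sum fun i _ => hmono j i (hj i)
      _ = (n : ℝ) * Fi n p lam j := by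
          rw [Finset.sum_const, Finset.card_univ, Fintype.card_fin, nsmul_eq_mul]
  have hn0 : (0:ℝ) < n := by exact_mod_cast (by omega : 0 < n)
  rw [div_mul_eq_mul_div, one_mul, div_le_iff₀ hn0]
  linarith [hsum]
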